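/- Let Y : [-1,1] → ℝ be the unique twice continuously differentiable solution of L[Y](x) = 3|x| on [-1,1]. Then Y(x) > |x| for every x ∈ [-1,1]. Equivalently, the functions U₁ := Y - x and V₁ := Y + x, which satisfy L[U₁] = 3(|x| - x) and L[V₁] = 3(|x| + x), are strictly positive on all of [-1,1]. (Geometrically: to first order in ε the generalized apparent horizon Ŝ_ε of the perturbed Kruskal slice lies entirely inside the domain of outer communications {û > 0, v̂ > 0} of the Kruskal spacetime, since û = ε U₁ + o(ε) and v̂ = ε V₁ + o(ε) on Ŝ_ε.) -/

import Mathlib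

open Set

/-- The linearized generalized-apparent-horizon operator
`L[z](x) = -(1 - x²) z''(x) + 2x z'(x) + z(x)`, written in terms of
given derivative functions `z'`, `z''`. -/
noncomputable def Lop (z z' z'' : ℝ → ℝ) (x : ℝ) : ℝ :=
  -(1 - x ^ 2) * z'' x + 2 * x * z' x + z x

/-- `z` is twice continuously differentiable on `[-1,1]`, with first derivative `z'`
and second derivative `z''`. -/
def IsC2On (z z' z'' : ℝ → ℝ) : Prop :=
  (∀ x ∈ Icc (-1 : ℝ) 1, HasDerivWithinAt z (z' x) (Icc (-1 : ℝ) 1) x) ∧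
  (∀ x ∈ Icc (-1 : ℝ) 1, HasDerivWithinAt z' (z'' x) (Icc (-1 : ℝ) 1) x) ∧
  ContinuousOn z'' (Icc (-1 : ℝ) 1)

open Filter Topology in
/-- Weak minimum principle for the operator `Lop` on `[-1,1]`:
if `L[U] ≥ 0` on `[-1,1]` then `U ≥ 0` on `[-1,1]`. -/
lemma lop_min_principle (U U' U'' : ℝ → ℝ)
    (hC2 : IsC2On U U' U'')
    (hL : ∀ x ∈ Icc (-1 : ℝ) 1, 0 ≤ Lop U U' U'' x) :
    ∀ x ∈ Icc (-1 : ℝ) 1, 0 ≤ U x := by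
  obtain ⟨hU, hU', _⟩ := hC2
  have hcont : ContinuousOn U (Icc (-1 : ℝ) 1) :=
    fun x hx => (hU x hx).continuousWithinAt
  by_contra hcon
  push_neg at hcon
  obtain ⟨x₀, hx₀, hx₀neg⟩ := hcon
  obtain ⟨c, hc, hcmin⟩ := isCompact_Icc.exists_isMinOn
    (nonempty_Icc.mpr (by norm_num)) hcont
  have hminle : ∀ x ∈ Icc (-1 : ℝ) 1, U c ≤ U x := fun x hx => hcmin hx
  have hcneg : U c < 0 := lt_of_le_of_lt (hminle x₀ hx₀) hx₀neg
  have hc1 : (-1 : ℝ) ≤ c := hc.1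
  have hc2 : c ≤ 1 := hc.2
  rcases eq_or_lt_of_le hc1 with h1 | h1
  · -- minimum at left endpoint c = -1 : one-sided derivative U'(-1) ≥ 0
    subst h1
    have hder := hU (-1) hc
    have hslope : Filter.Tendsto (slope U (-1)) (𝓝[Icc (-1 : ℝ) 1 \ {-1}] (-1))
        (𝓝 (U' (-1))) := hasDerivWithinAt_iff_tendsto_slope.mp hder
    have hne : (𝓝[Icc (-1 : ℝ) 1 \ {-1}] (-1) : Filter ℝ).NeBot := by
      have h0 : ((-1 : ℝ)) ∈ closure (Ioo (-1 : ℝ) 1) := by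
        rw [closure_Ioo (by norm_num : (-1 : ℝ) ≠ 1)]
        exact ⟨le_refl _, by norm_num⟩
      have := mem_closure_iff_nhdsWithin_neBot.mp h0
      exact this.mono (nhdsWithin_mono _ (fun x hx => ⟨Ioo_subset_Icc_self hx, by
        simp only [mem_singleton_iff]; exact ne_of_gt hx.1⟩))
    have hge : 0 ≤ U' (-1) := by
      refine ge_of_tendsto hslope ?_
      filter_upwards [self_mem_nhdsWithin] with x hx
      rcases hx with ⟨hxI, hxne⟩
      have hxgt : (-1 : ℝ) < x := lt_of_le_of_ne hxI.1 (Ne.symm hxne)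
      have : 0 ≤ U x - U (-1) := sub_nonneg.mpr (hminle x hxI)
      have hden : 0 < x - (-1) := by linarith
      rw [slope_def_field]
      exact div_nonneg this hden.le
    have := hL (-1) hc
    simp only [Lop] at this
    nlinarith
  rcases eq_or_lt_of_le hc2 with h2 | h2
  · -- minimum at right endpoint c = 1 : one-sided derivative U'(1) ≤ 0
    subst h2
    have hder := hU 1 hc
    have hslope : Filter.Tendsto (slope U 1) (𝓝[Icc (-1 : ℝ) 1 \ {1}] 1)
        (𝓝 (U' 1)) := hasDerivWithinAt_iff_tendsto_slope.mp hder
    have hne : (𝓝[Icc (-1 : ℝ) 1 \ {1}] (1 : ℝ) : Filter ℝ).NeBot := by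
      have h0 : ((1 : ℝ)) ∈ closure (Ioo (-1 : ℝ) 1) := by
        rw [closure_Ioo (by norm_num : (-1 : ℝ) ≠ 1)]
        exact ⟨by norm_num, le_refl _⟩
      have := mem_closure_iff_nhdsWithin_neBot.mp h0
      exact this.mono (nhdsWithin_mono _ (fun x hx => ⟨Ioo_subset_Icc_self hx, by
        simp only [mem_singleton_iff]; exact ne_of_lt hx.2⟩))
    have hle : U' 1 ≤ 0 := by
      refine le_of_tendsto hslope ?_
      filter_upwards [self_mem_nhdsWithin] with x hx
      rcases hx with ⟨hxI, hxne⟩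
      have hxlt : x < 1 := lt_of_le_of_ne hxI.2 hxne
      have hnum : 0 ≤ U x - U 1 := sub_nonneg.mpr (hminle x hxI)
      have hden : x - 1 < 0 := by linarith
      rw [slope_def_field]
      exact div_nonpos_of_nonneg_of_nonpos hnum hden.le
    have := hL 1 hc
    simp only [Lop] at this
    nlinarith
  · -- interior minimum
    have hmemnhds : Icc (-1 : ℝ) 1 ∈ 𝓝 c := Icc_mem_nhds h1 h2
    have hdU : HasDerivAt U (U' c) c := (hU c hc).hasDerivAt hmemnhds
    have hdU' : HasDerivAt U' (U'' c) c := (hU' c hc).hasDerivAt hmemnhds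
    have hlocmin : IsLocalMin U c := by
      refine Filter.eventually_of_mem hmemnhds ?_
      exact fun x hx => hminle x hx
    have hU'c : U' c = 0 := hlocmin.hasDerivAt_eq_zero hdU
    -- second derivative at interior minimum is nonnegative
    have hU''c : 0 ≤ U'' c := by
      by_contra hneg
      push_neg at hneg
      have hslope : Filter.Tendsto (slope U' c) (𝓝[≠] c) (𝓝 (U'' c)) :=
        hasDerivAt_iff_tendsto_slope.mp hdU'
      have hev : ∀ᶠ x in 𝓝[>] c, slope U' c x < 0 := by
        have h1' : ∀ᶠ x in 𝓝[≠] c, slope U' c x < 0 :=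
          hslope.eventually (gt_mem_nhds hneg)
        exact h1'.filter_mono (nhdsWithin_mono _ (fun x hx => ne_of_gt hx))
      have hev2 : ∀ᶠ x in 𝓝[>] c, x < 1 :=
        eventually_nhdsWithin_of_eventually_nhds (eventually_lt_nhds h2)
      obtain ⟨u, hu, huss⟩ := mem_nhdsGT_iff_exists_Ioo_subset.mp
        (hev.and hev2)
      set b : ℝ := (c + u) / 2 with hb
      have hcu : c < u := hu
      have hcb : c < b := by simp [hb]; linarith
      have hbu : b < u := by simp [hb]; linarith
      have hbprop : slope U' c b < 0 ∧ b < 1 := huss ⟨hcb, hbu⟩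
      have hb1 : b < 1 := hbprop.2
      have hIccsub : Icc c b ⊆ Icc (-1 : ℝ) 1 :=
        Icc_subset_Icc (by linarith) (by linarith)
      have hU'neg : ∀ x ∈ Ioo c b, U' x < 0 := by
        intro x hx
        have hx' : x ∈ Ioo c u := ⟨hx.1, lt_trans hx.2 hbu⟩
        have hsl : slope U' c x < 0 := (huss hx').1
        rw [slope_def_field] at hsl
        have hxc : 0 < x - c := by linarith [hx.1]
        have hnum : U' x - U' c < 0 := by
          by_contra hge
          push_neg at hge
          exact absurd (div_nonneg hge hxc.le) (not_le.mpr hsl)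
        rw [hU'c] at hnum
        linarith
      have hanti : StrictAntiOn U (Icc c b) := by
        refine strictAntiOn_of_deriv_neg (convex_Icc c b)
          (hcont.mono hIccsub) ?_
        intro x hx
        rw [interior_Icc] at hx
        have hxI : x ∈ Icc (-1 : ℝ) 1 := hIccsub (Ioo_subset_Icc_self hx)
        have hxmem : Icc (-1 : ℝ) 1 ∈ 𝓝 x :=
          Icc_mem_nhds (by linarith [hx.1, hc.1]) (by linarith [hx.2])
        have := ((hU x hxI).hasDerivAt hxmem).deriv
        rw [this]
        exact hU'neg x hx
      have hlt : U b < U c :=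
        hanti (left_mem_Icc.mpr hcb.le) (right_mem_Icc.mpr hcb.le) hcb
      have : U c ≤ U b := hminle b (hIccsub (right_mem_Icc.mpr hcb.le))
      linarith
    have := hL c hc
    simp only [Lop, hU'c] at this
    nlinarith [mul_nonneg (show (0:ℝ) ≤ 1 - c ^ 2 by nlinarith) hU''c]

/-- If `Y` is a `C²` solution of `L[Y](x) = 3|x|` on `[-1,1]`, then `Y(x) > |x|`
everywhere; equivalently the functions `U₁ = Y - x` and `V₁ = Y + x` are
strictly positive on all of `[-1,1]`. -/
theorem Y1_gt_abs (Y Y' Y'' : ℝ → ℝ)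
    (hC2 : IsC2On Y Y' Y'')
    (hL : ∀ x ∈ Icc (-1 : ℝ) 1, Lop Y Y' Y'' x = 3 * |x|) :
    ∀ x ∈ Icc (-1 : ℝ) 1, |x| < Y x ∧ 0 < Y x - x ∧ 0 < Y x + x := by
  obtain ⟨hY, hY', hY''⟩ := hC2
  -- barrier function `w x = (2x² + 4)/5`
  have hwd : ∀ x : ℝ, HasDerivAt (fun y : ℝ => (2 * y ^ 2 + 4) / 5) (4 * x / 5) x := by
    intro x
    have h := (((hasDerivAt_pow 2 x).const_mul 2).add_const 4).div_const 5
    refine h.congr_deriv ?_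
    push_cast
    ring
  have hwd' : ∀ x : ℝ, HasDerivAt (fun y : ℝ => 4 * y / 5) (4 / 5) x := by
    intro x
    have h := ((hasDerivAt_id x).const_mul 4).div_const 5
    refine h.congr_deriv ?_
    ring
  have hC2D : IsC2On (fun x => Y x - (2 * x ^ 2 + 4) / 5)
      (fun x => Y' x - 4 * x / 5) (fun x => Y'' x - 4 / 5) := by
    refine ⟨fun x hx => (hY x hx).sub ((hwd x).hasDerivWithinAt),
      fun x hx => (hY' x hx).sub ((hwd' x).hasDerivWithinAt),
      hY''.sub continuousOn_const⟩
  have hLD : ∀ x ∈ Icc (-1 : ℝ) 1,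
      0 ≤ Lop (fun x => Y x - (2 * x ^ 2 + 4) / 5)
        (fun x => Y' x - 4 * x / 5) (fun x => Y'' x - 4 / 5) x := by
    intro x hx
    have h1 := hL x hx
    have habs : |x| ≤ 1 := abs_le.mpr ⟨hx.1, hx.2⟩
    simp only [Lop] at h1 ⊢
    nlinarith [sq_abs x, abs_nonneg x]
  have hmin := lop_min_principle _ _ _ hC2D hLD
  intro x hx
  have h0 : 0 ≤ Y x - (2 * x ^ 2 + 4) / 5 := hmin x hx
  have hwx : |x| < (2 * x ^ 2 + 4) / 5 := by
    nlinarith [sq_abs x, sq_nonneg (|x| - 5 / 4)]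
  have hmain : |x| < Y x := by linarith
  exact ⟨hmain, by linarith [le_abs_self x], by linarith [neg_abs_le x]⟩
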